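/- For every odd integer n with n ≥ 5, the rainbow connection number of the cycle graph C_n on n vertices equals (n+1)/2, i.e. the ceiling of n/2. -/

import Mathlib

open SimpleGraph

/-- An edge coloring of `G` with `k` colors makes `G` rainbow connected if between every pair
of distinct vertices there is a path all of whose edges receive pairwise distinct colors. -/
def IsRainbowConnected {V : Type*} (G : SimpleGraph V) {k : ℕ} (c : Sym2 V → Fin k) : Prop :=
  ∀ u v : V, u ≠ v → ∃ p : G.Walk u v, p.IsPath ∧ (p.edges.map c).Nodup

/-- The rainbow connection number `rc G`: the minimum number of colors `k` for which some
edge coloring with `k` colors makes `G` rainbow connected. -/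
noncomputable def rc {V : Type*} (G : SimpleGraph V) : ℕ :=
  sInf {k | ∃ c : Sym2 V → Fin k, IsRainbowConnected G c}

namespace RCAux

open Fin.CommRing

variable {K : ℕ}

lemma cast_inj' {n : ℕ} [NeZero n] {a b : ℕ} (ha : a < n) (hb : b < n)
    (h : (a : Fin n) = (b : Fin n)) : a = b := by
  have := congrArg Fin.val h
  rwa [Fin.val_natCast, Fin.val_natCast, Nat.mod_eq_of_lt ha, Nat.mod_eq_of_lt hb] at this

lemma adj_succ (hK : 1 ≤ K) (u : Fin (2*K+1)) : (cycleGraph (2*K+1)).Adj u (u+1) := by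
  rw [cycleGraph_adj']
  right
  have h : u + 1 - u = 1 := by ring
  rw [h, Fin.val_one']
  exact Nat.mod_eq_of_lt (by omega)

def arcEdges : ℕ → Fin (2*K+1) → List (Sym2 (Fin (2*K+1)))
  | 0, _ => []
  | d+1, u => s(u, u+1) :: arcEdges d (u+1)

def arcWalk (hK : 1 ≤ K) : (d : ℕ) → (u : Fin (2*K+1)) →
    (cycleGraph (2*K+1)).Walk u (u + (d : Fin (2*K+1)))
  | 0, u => Walk.nil.copy rfl (by simp)
  | d+1, u => (Walk.cons (adj_succ hK u) (arcWalk hK d (u+1))).copy rfl (by push_cast; ring)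

lemma arcWalk_edges (hK : 1 ≤ K) (d : ℕ) (u : Fin (2*K+1)) :
    (arcWalk hK d u).edges = arcEdges d u := by
  induction d generalizing u with
  | zero => simp [arcWalk, arcEdges]
  | succ d ih => simp [arcWalk, arcEdges, ih]

lemma arcWalk_support (hK : 1 ≤ K) (d : ℕ) (u : Fin (2*K+1)) :
    (arcWalk hK d u).support = (List.range (d+1)).map (fun i : ℕ => u + (i : Fin (2*K+1))) := by
  induction d generalizing u with
  | zero => simp [arcWalk, List.range_succ]
  | succ d ih =>
    rw [List.range_succ_eq_map]
    simp only [arcWalk, Walk.support_copy, Walk.support_cons, ih, List.map_cons, List.map_map]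
    have h0 : u + ((0:ℕ) : Fin (2*K+1)) = u := by simp
    rw [h0]
    congr 1
    apply List.map_congr_left
    intro i _
    simp only [Function.comp_apply, Nat.succ_eq_add_one]
    push_cast
    ring

lemma arcEdges_eq_map (d : ℕ) (u : Fin (2*K+1)) :
    arcEdges d u = (List.range d).map
      (fun i : ℕ => s(u + (i : Fin (2*K+1)), u + (i : Fin (2*K+1)) + 1)) := by
  induction d generalizing u with
  | zero => simp [arcEdges]
  | succ d ih =>
    rw [List.range_succ_eq_map]
    simp only [arcEdges, ih, List.map_cons, List.map_map]
    have h0 : u + ((0:ℕ) : Fin (2*K+1)) = u := by simp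
    rw [h0]
    congr 1
    apply List.map_congr_left
    intro i _
    simp only [Function.comp_apply, Nat.succ_eq_add_one]
    have h1 : u + 1 + ((i:ℕ) : Fin (2*K+1)) = u + ((i+1 : ℕ) : Fin (2*K+1)) := by
      push_cast; ring
    rw [h1]

lemma arcEdges_length (d : ℕ) (u : Fin (2*K+1)) : (arcEdges d u).length = d := by
  rw [arcEdges_eq_map, List.length_map, List.length_range]

lemma arcEdges_succ (d : ℕ) (u : Fin (2*K+1)) :
    arcEdges (d+1) u = arcEdges d u ++
      [s(u + (d : Fin (2*K+1)), u + (d : Fin (2*K+1)) + 1)] := by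
  rw [arcEdges_eq_map, List.range_succ, List.map_append, ← arcEdges_eq_map]
  simp

lemma dvd_helper {k m : ℕ} (hd : k ∣ m) (h1 : 0 < m) (h2 : m < 2*k) : m = k := by
  obtain ⟨c, rfl⟩ := hd
  have hc1 : c ≠ 0 := by rintro rfl; simp at h1
  have hc2 : c < 2 := by
    by_contra hh
    push_neg at hh
    have : k*2 ≤ k*c := Nat.mul_le_mul_left k hh
    omega
  have : c = 1 := by omega
  subst this
  simp

lemma color_arith (hK : 2 ≤ K) (a i j : ℕ) (ha : a < 2*K+1) (hij : i < j) (hj : j ≤ K - 1)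
    (h : ((a + i) % (2*K+1)) % (K+1) = ((a + j) % (2*K+1)) % (K+1)) : False := by
  rcases Nat.lt_or_ge (a+j) (2*K+1) with h2 | h2
  · rw [Nat.mod_eq_of_lt (show a+i < 2*K+1 by omega), Nat.mod_eq_of_lt h2] at h
    have hd : (K+1) ∣ (a+j) - (a+i) := (Nat.modEq_iff_dvd' (by omega)).mp h
    have hle := Nat.le_of_dvd (by omega) hd
    omega
  · rcases Nat.lt_or_ge (a+i) (2*K+1) with h1 | h1
    · -- B wraps, A does not
      have hB : (a+j) % (2*K+1) = a + j - (2*K+1) := by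
        rw [Nat.mod_eq_sub_mod h2]
        exact Nat.mod_eq_of_lt (by omega)
      rw [Nat.mod_eq_of_lt h1, hB] at h
      have hd : (K+1) ∣ (a+i) - (a+j-(2*K+1)) := (Nat.modEq_iff_dvd' (by omega)).mp h.symm
      have hv : (a+i) - (a+j-(2*K+1)) = (2*K+1) - (j-i) := by omega
      rw [hv] at hd
      have := dvd_helper hd (by omega) (by omega)
      omega
    · -- both wrap
      have hA : (a+i) % (2*K+1) = a + i - (2*K+1) := by
        rw [Nat.mod_eq_sub_mod h1]
        exact Nat.mod_eq_of_lt (by omega)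
      have hB : (a+j) % (2*K+1) = a + j - (2*K+1) := by
        rw [Nat.mod_eq_sub_mod h2]
        exact Nat.mod_eq_of_lt (by omega)
      rw [hA, hB] at h
      have hd : (K+1) ∣ (a+j-(2*K+1)) - (a+i-(2*K+1)) := (Nat.modEq_iff_dvd' (by omega)).mp h
      have hle := Nat.le_of_dvd (by omega) hd
      omega

lemma two_ne (hK : 1 ≤ K) (x : Fin (2*K+1)) : x + 1 + 1 ≠ x := by
  intro key
  have key2 : x + (1 + 1) = x + 0 := by rw [add_zero, ← add_assoc]; exact key
  have key3 := add_left_cancel key2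
  have kv := congrArg Fin.val key3
  rw [Fin.val_add, Fin.val_one', Fin.val_zero] at kv
  have h3 : 1 % (2*K+1) = 1 := Nat.mod_eq_of_lt (by omega)
  rw [h3] at kv
  have h4 : (1+1) % (2*K+1) = 1 + 1 := Nat.mod_eq_of_lt (by omega)
  omega

def col : Sym2 (Fin (2*K+1)) → Fin (K+1) :=
  Sym2.lift ⟨fun a b =>
    if a + 1 = b ∧ ¬ b + 1 = a then ⟨a.val % (K+1), Nat.mod_lt _ K.succ_pos⟩
    else if b + 1 = a ∧ ¬ a + 1 = b then ⟨b.val % (K+1), Nat.mod_lt _ K.succ_pos⟩ else 0,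
   by
    intro a b
    dsimp only
    by_cases h1 : a + 1 = b <;> by_cases h2 : b + 1 = a <;> simp [h1, h2]⟩

lemma col_edge (hK : 1 ≤ K) (x : Fin (2*K+1)) :
    col s(x, x+1) = ⟨x.val % (K+1), Nat.mod_lt _ K.succ_pos⟩ := by
  simp only [col, Sym2.lift_mk]
  rw [if_pos ⟨trivial, two_ne hK x⟩]

lemma val_add_cast (u : Fin (2*K+1)) (i : ℕ) :
    (u + (i : Fin (2*K+1))).val = (u.val + i) % (2*K+1) := by
  rw [Fin.val_add, Fin.val_natCast]
  exact Nat.add_mod_mod u.val i (2*K+1)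

lemma half_path (hK : 2 ≤ K) {u v : Fin (2*K+1)} (hne : u ≠ v) (hd : (v - u).val ≤ K) :
    ∃ p : (cycleGraph (2*K+1)).Walk u v, p.IsPath ∧ (p.edges.map (col (K := K))).Nodup := by
  set d := (v - u).val with hdd
  have hend : u + ((d : ℕ) : Fin (2*K+1)) = v := by
    rw [hdd, Fin.cast_val_eq_self]
    ring
  refine ⟨(arcWalk (by omega) d u).copy rfl hend, ?_, ?_⟩
  · apply Walk.IsPath.mk'
    rw [Walk.support_copy, arcWalk_support]
    apply (List.nodup_range (n := d+1)).map_on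
    intro i hi j hj hf
    rw [List.mem_range] at hi hj
    exact cast_inj' (by omega) (by omega) (add_left_cancel hf)
  · rw [Walk.edges_copy, arcWalk_edges, arcEdges_eq_map, List.map_map]
    apply (List.nodup_range (n := d)).map_on
    intro i hi j hj hf
    rw [List.mem_range] at hi hj
    simp only [Function.comp_apply] at hf
    rw [col_edge (by omega), col_edge (by omega)] at hf
    have hf' : (u + (i : Fin (2*K+1))).val % (K+1) = (u + (j : Fin (2*K+1))).val % (K+1) :=
      congrArg Fin.val hf
    rw [val_add_cast, val_add_cast] at hf'
    rcases Nat.lt_trichotomy i j with h | h | h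
    · exact (color_arith hK u.val i j u.isLt h (by omega) hf').elim
    · exact h
    · exact (color_arith hK u.val j i u.isLt h (by omega) hf'.symm).elim

lemma val_sub_add (u v : Fin (2*K+1)) (hne : u ≠ v) :
    (u - v).val + (v - u).val = 2*K+1 := by
  have h1 : (u - v) + (v - u) = 0 := by ring
  have h2 := congrArg Fin.val h1
  rw [Fin.val_add, Fin.val_zero] at h2
  have h3 : (u - v).val ≠ 0 := by
    intro h
    exact hne (sub_eq_zero.mp (Fin.ext (by simp [h])))
  have h4 : (v - u).val ≠ 0 := by
    intro h
    exact hne (sub_eq_zero.mp (Fin.ext (by simp [h]))).symm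
  obtain ⟨c, hc⟩ := Nat.dvd_of_mod_eq_zero h2
  have b1 := (u - v).isLt
  have b2 := (v - u).isLt
  have hc1 : c ≠ 0 := by rintro rfl; rw [Nat.mul_zero] at hc; omega
  have hc2 : c < 2 := by
    by_contra hh
    push_neg at hh
    have : (2*K+1)*2 ≤ (2*K+1)*c := Nat.mul_le_mul_left _ hh
    omega
  have : c = 1 := by omega
  subst this
  omega

lemma upper (hK : 2 ≤ K) : IsRainbowConnected (cycleGraph (2*K+1)) (col (K := K)) := by
  intro u v hne
  rcases le_or_gt ((v - u).val) K with h | h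
  · exact half_path hK hne h
  · have h' : (u - v).val ≤ K := by
      have := val_sub_add u v hne
      omega
    obtain ⟨p, hp, hnd⟩ := half_path hK hne.symm h'
    refine ⟨p.reverse, hp.reverse, ?_⟩
    rw [Walk.edges_reverse, List.map_reverse]
    exact List.nodup_reverse.mpr hnd

lemma walk_steps (hK : 1 ≤ K) {u v : Fin (2*K+1)} (p : (cycleGraph (2*K+1)).Walk u v) :
    ∃ a b : ℕ, a + b = p.length ∧
      u + ((a : ℕ) : Fin (2*K+1)) = v + ((b : ℕ) : Fin (2*K+1)) := by
  induction p with
  | nil => exact ⟨0, 0, rfl, by simp⟩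
  | @cons x y z h q ih =>
    obtain ⟨a, b, hab, he⟩ := ih
    rcases cycleGraph_adj'.mp h with h1 | h1
    · -- x - y = 1, i.e. down step: x = 1 + y
      have h2 : x - y = 1 := by
        apply Fin.ext
        rw [h1, Fin.val_one']
        exact (Nat.mod_eq_of_lt (by omega)).symm
      have h3 : x = 1 + y := by
        rw [← h2]; ring
      refine ⟨a, b+1, by simp [Walk.length_cons]; omega, ?_⟩
      rw [h3]
      push_cast
      push_cast at he
      linear_combination he
    · -- y - x = 1, up step: y = 1 + x
      have h2 : y - x = 1 := by
        apply Fin.ext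
        rw [h1, Fin.val_one']
        exact (Nat.mod_eq_of_lt (by omega)).symm
      have h3 : y = 1 + x := by
        rw [← h2]; ring
      rw [h3] at he
      refine ⟨a+1, b, by simp [Walk.length_cons]; omega, ?_⟩
      push_cast
      push_cast at he
      linear_combination he

lemma walk_eq_arc (hK : 1 ≤ K) {u v : Fin (2*K+1)} (p : (cycleGraph (2*K+1)).Walk u v) :
    ∀ (_ : p.length ≤ K) (_ : v = u + ((p.length : ℕ) : Fin (2*K+1))),
      p.edges = arcEdges p.length u := by
  induction p with
  | nil => intro _ _; simp [arcEdges]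
  | @cons x y z h q ih =>
    intro hlen hend
    simp only [Walk.length_cons] at hlen hend ⊢
    rcases cycleGraph_adj'.mp h with h1 | h1
    · -- down step: x = 1 + y, contradiction
      exfalso
      have h2 : x - y = 1 := by
        apply Fin.ext
        rw [h1, Fin.val_one']
        exact (Nat.mod_eq_of_lt (by omega)).symm
      have h3 : x = 1 + y := by rw [← h2]; ring
      obtain ⟨a, b, hab, he⟩ := walk_steps hK q
      rw [hend, h3] at he
      have hcast : ((a : ℕ) : Fin (2*K+1)) = ((q.length + 2 + b : ℕ) : Fin (2*K+1)) := by
        apply add_left_cancel (a := y)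
        push_cast
        push_cast at he
        linear_combination he
      have ha := cast_inj' (show a < 2*K+1 by omega) (show q.length+2+b < 2*K+1 by omega) hcast
      omega
    · -- up step: y = x + 1
      have h2 : y - x = 1 := by
        apply Fin.ext
        rw [h1, Fin.val_one']
        exact (Nat.mod_eq_of_lt (by omega)).symm
      have hxy : y = x + 1 := by
        have h5 : y = 1 + x := by rw [← h2]; ring
        rw [h5]; ring
      subst hxy
      have hq := ih (by omega) (by push_cast at hend ⊢; linear_combination hend)
      rw [Walk.edges_cons, hq]
      rfl

lemma no_small (m : ℕ) (c : Sym2 (Fin (2*(m+2)+1)) → Fin (m+2))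
    (hc : IsRainbowConnected (cycleGraph (2*(m+2)+1)) c) : False := by
  have hK : 1 ≤ m + 2 := by omega
  -- Step 1: every arc of length m+2 is rainbow
  have harc : ∀ u : Fin (2*(m+2)+1), ((arcEdges (m+2) u).map c).Nodup := by
    intro u
    have hne : u ≠ u + ((m+2 : ℕ) : Fin (2*(m+2)+1)) := by
      intro h
      have h0 : u + ((0:ℕ) : Fin (2*(m+2)+1)) = u + ((m+2:ℕ) : Fin (2*(m+2)+1)) := by
        rw [Nat.cast_zero, add_zero]; exact h
      have := cast_inj' (n := 2*(m+2)+1) (show 0 < 2*(m+2)+1 by omega)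
        (show m+2 < 2*(m+2)+1 by omega) (add_left_cancel h0)
      omega
    obtain ⟨p, hp, hnd⟩ := hc u _ hne
    have hlen : p.length ≤ m + 2 := by
      have h1 := hnd.length_le_card
      simpa using h1
    obtain ⟨a, b, hab, he⟩ := walk_steps hK p
    have hcast : ((a:ℕ) : Fin (2*(m+2)+1)) = ((m+2+b : ℕ) : Fin (2*(m+2)+1)) := by
      apply add_left_cancel (a := u)
      push_cast
      push_cast at he
      linear_combination he
    have ha := cast_inj' (show a < 2*(m+2)+1 by omega) (show m+2+b < 2*(m+2)+1 by omega) hcast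
    have hlenK : p.length = m + 2 := by omega
    have hedges := walk_eq_arc hK p (by omega) (by rw [hlenK])
    rw [hedges, hlenK] at hnd
    exact hnd
  -- Step 2: colors repeat with period m+2
  have hstep : ∀ u : Fin (2*(m+2)+1),
      c s(u, u+1) = c s(u + ((m+2:ℕ) : Fin (2*(m+2)+1)), u + ((m+2:ℕ) : Fin (2*(m+2)+1)) + 1) := by
    intro u
    have h1 := harc u
    have h2 := harc (u+1)
    rw [show arcEdges (m+2) (u+1) = arcEdges (m+1) (u+1) ++
        [s((u+1) + ((m+1:ℕ) : Fin (2*(m+2)+1)), (u+1) + ((m+1:ℕ) : Fin (2*(m+2)+1)) + 1)]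
      from arcEdges_succ (m+1) (u+1)] at h2
    have hpt : (u+1) + ((m+1:ℕ) : Fin (2*(m+2)+1)) = u + ((m+2:ℕ) : Fin (2*(m+2)+1)) := by
      push_cast; ring
    rw [hpt] at h2
    rw [show arcEdges (m+2) u = s(u,u+1) :: arcEdges (m+1) (u+1) from rfl, List.map_cons] at h1
    rw [List.map_append] at h2
    set M := ((arcEdges (m+1) (u+1)).map c).toFinset with hM
    have hnd1 := (List.nodup_cons.mp h1).2
    have hnotin1 : c s(u, u+1) ∉ M := by
      rw [hM, List.mem_toFinset]
      exact (List.nodup_cons.mp h1).1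
    have hnotin2 : c s(u + ((m+2:ℕ) : Fin (2*(m+2)+1)), u + ((m+2:ℕ) : Fin (2*(m+2)+1)) + 1) ∉ M := by
      rw [hM, List.mem_toFinset]
      intro hmem
      have hdisj := (List.nodup_append.mp h2).2.2
      exact hdisj _ hmem _ (by simp) rfl
    have hcard : M.card = m + 1 := by
      rw [hM, List.toFinset_card_of_nodup hnd1, List.length_map, arcEdges_length]
    have hcardc : Mᶜ.card = 1 := by
      rw [Finset.card_compl, hcard]
      have : Fintype.card (Fin (m+2)) = m+2 := Fintype.card_fin _
      omega
    obtain ⟨x, hx⟩ := Finset.card_eq_one.mp hcardc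
    have e1 : c s(u, u+1) ∈ Mᶜ := Finset.mem_compl.mpr hnotin1
    have e2 : c s(u + ((m+2:ℕ) : Fin (2*(m+2)+1)), u + ((m+2:ℕ) : Fin (2*(m+2)+1)) + 1) ∈ Mᶜ :=
      Finset.mem_compl.mpr hnotin2
    rw [hx, Finset.mem_singleton] at e1 e2
    rw [e1, e2]
  -- Step 3: iterate
  have hmul : ∀ (t : ℕ) (u : Fin (2*(m+2)+1)),
      c s(u, u+1) = c s(u + ((t*(m+2) : ℕ) : Fin (2*(m+2)+1)),
        u + ((t*(m+2) : ℕ) : Fin (2*(m+2)+1)) + 1) := by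
    intro t
    induction t with
    | zero => intro u; simp
    | succ t ih =>
      intro u
      rw [ih u, hstep (u + ((t*(m+2):ℕ) : Fin (2*(m+2)+1)))]
      have hpt : u + ((t*(m+2):ℕ) : Fin (2*(m+2)+1)) + ((m+2:ℕ) : Fin (2*(m+2)+1))
          = u + (((t+1)*(m+2) : ℕ) : Fin (2*(m+2)+1)) := by
        push_cast; ring
      rw [hpt]
  have hone : (((2*m+3)*(m+2) : ℕ) : Fin (2*(m+2)+1)) = 1 := by
    have hnat : (2*m+3)*(m+2) = (2*(m+2)+1)*(m+1) + 1 := by ring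
    rw [hnat, Nat.cast_add, Nat.cast_mul, Fin.natCast_self, zero_mul, zero_add, Nat.cast_one]
  have hcons : ∀ u : Fin (2*(m+2)+1), c s(u, u+1) = c s(u+1, u+1+1) := by
    intro u
    have h := hmul (2*m+3) u
    rw [hone] at h
    exact h
  have h1 := harc 0
  rw [show arcEdges (m+2) (0 : Fin (2*(m+2)+1))
      = s(0,0+1) :: s(0+1, 0+1+1) :: arcEdges m (0+1+1) from rfl] at h1
  simp only [List.map_cons, List.nodup_cons, List.mem_cons] at h1
  exact h1.1 (Or.inl (hcons 0))

end RCAux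

/-- For every odd integer `n ≥ 5`, the rainbow connection number of the cycle `C n`
equals `(n + 1) / 2 = ⌈n / 2⌉`. -/
theorem rc_cycleGraph_odd (n : ℕ) (h5 : 5 ≤ n) (hodd : Odd n) :
    rc (cycleGraph n) = (n + 1) / 2 := by
  obtain ⟨K, rfl⟩ := hodd
  have hK : 2 ≤ K := by omega
  have hhalf : (2*K+1+1)/2 = K+1 := by omega
  rw [hhalf]
  unfold rc
  have hup : (K+1) ∈ {k | ∃ c : Sym2 (Fin (2*K+1)) → Fin k,
      IsRainbowConnected (cycleGraph (2*K+1)) c} :=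
    ⟨RCAux.col, RCAux.upper hK⟩
  have hlow : ∀ j ∈ {k | ∃ c : Sym2 (Fin (2*K+1)) → Fin k,
      IsRainbowConnected (cycleGraph (2*K+1)) c}, K+1 ≤ j := by
    intro j hj
    by_contra hlt
    push_neg at hlt
    obtain ⟨c, hc⟩ := hj
    obtain ⟨m, rfl⟩ : ∃ m, K = m + 2 := ⟨K - 2, by omega⟩
    have hle : j ≤ m + 2 := by omega
    apply RCAux.no_small m (fun e => Fin.castLE hle (c e))
    intro u v huv
    obtain ⟨p, hp, hnd⟩ := hc u v huv
    refine ⟨p, hp, ?_⟩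
    have hmm : p.edges.map (fun e => Fin.castLE hle (c e))
        = (p.edges.map c).map (Fin.castLE hle) := by
      rw [List.map_map]; rfl
    rw [hmm]
    exact hnd.map (Fin.castLE_injective hle)
  exact le_antisymm (Nat.sInf_le hup) (hlow _ (Nat.sInf_mem ⟨_, hup⟩))
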